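/- The family of homogeneous modules of a weakly graphic homogeneous relation is partitive: it is weakly partitive and additionally closed under symmetric difference of overlapping members. -/
import Mathlib


/-- `H` is a homogeneous relation: for each `x`, the binary relation
`H x · ·` is an equivalence relation on the elements distinct from `x`. -/
def IsHomRel {X : Type*} (H : X → X → X → Prop) : Prop :=
  (∀ x y, y ≠ x → H x y y) ∧
  (∀ x y z, y ≠ x → z ≠ x → H x y z → H x z y) ∧
  (∀ x y z w, y ≠ x → z ≠ x → w ≠ x → H x y z → H x z w → H x y w)

/-- `M` is a homogeneous module of `H`. -/
def IsModule {X : Type*} (H : X → X → X → Prop) (M : Set X) : Prop :=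
  ∀ m ∈ M, ∀ m' ∈ M, ∀ x ∉ M, H x m m'

/-- Two sets overlap. -/
def Overlap {X : Type*} (A B : Set X) : Prop :=
  (A ∩ B).Nonempty ∧ (A \ B).Nonempty ∧ (B \ A).Nonempty

def WeaklyGraphic {X : Type*} (H : X → X → X → Prop) : Prop :=
  ∀ x y z : X, x ≠ y → x ≠ z → y ≠ z → H y x z → H z x y → H x y z

/-- Key lemma: if `m ∈ A \ B`, `x ∈ A ∩ B`, `c ∈ B \ A`, then `H x m c`. -/
lemma key_lemma {X : Type*} {H : X → X → X → Prop}
    (hH : IsHomRel H) (hwg : WeaklyGraphic H) {A B : Set X}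
    (hA : IsModule H A) (hB : IsModule H B) {m x c : X}
    (hmA : m ∈ A) (hmB : m ∉ B) (hxA : x ∈ A) (hxB : x ∈ B)
    (hcB : c ∈ B) (hcA : c ∉ A) : H x m c := by
  have hxm : x ≠ m := fun h => hmB (h ▸ hxB)
  have hxc : x ≠ c := fun h => hcA (h ▸ hxA)
  have hmc : m ≠ c := fun h => hcA (h ▸ hmA)
  have h1 : H m x c := hB x hxB c hcB m hmB
  have h2 : H c m x := hA m hmA x hxA c hcA
  have h3 : H c x m := hH.2.1 c m x hmc hxc h2
  exact hwg x m c hxm hxc hmc h1 h3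

theorem stmt_17 {X : Type*} [Fintype X] (H : X → X → X → Prop)
    (hH : IsHomRel H) (hwg : WeaklyGraphic H) :
    IsModule H (Set.univ : Set X) ∧
    (∀ x : X, IsModule H {x}) ∧
    ∀ A B : Set X, IsModule H A → IsModule H B → Overlap A B →
      IsModule H (A ∪ B) ∧ IsModule H (A ∩ B) ∧ IsModule H (A \ B) ∧
        IsModule H ((A \ B) ∪ (B \ A)) := by
  obtain ⟨hrefl, hsym, htrans⟩ := hH
  refine ⟨?_, ?_, ?_⟩
  · intro m _ m' _ x hx; exact absurd (Set.mem_univ x) hx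
  · intro a m hm m' hm' x hx
    have h1 : m = a := hm
    have h2 : m' = a := hm'
    subst h1; subst h2
    exact hrefl x _ (fun h => hx h.symm)
  · intro A B hA hB hov
    obtain ⟨⟨c, hcA, hcB⟩, ⟨a, haA, haB⟩, ⟨b, hbB, hbA⟩⟩ := hov
    -- union
    have hunion : IsModule H (A ∪ B) := by
      intro m hm m' hm' x hx
      have hxA : x ∉ A := fun h => hx (Or.inl h)
      have hxB : x ∉ B := fun h => hx (Or.inr h)
      rcases hm with hm | hm <;> rcases hm' with hm' | hm'
      · exact hA m hm m' hm' x hxA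
      · have h1 : H x m c := hA m hm c hcA x hxA
        have h2 : H x c m' := hB c hcB m' hm' x hxB
        exact htrans x m c m' (fun h => hxA (h ▸ hm)) (fun h => hxA (h ▸ hcA))
          (fun h => hxB (h ▸ hm')) h1 h2
      · have h1 : H x m c := hB m hm c hcB x hxB
        have h2 : H x c m' := hA c hcA m' hm' x hxA
        exact htrans x m c m' (fun h => hxB (h ▸ hm)) (fun h => hxA (h ▸ hcA))
          (fun h => hxA (h ▸ hm')) h1 h2
      · exact hB m hm m' hm' x hxB
    -- intersection
    have hinter : IsModule H (A ∩ B) := by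
      intro m hm m' hm' x hx
      by_cases hxA : x ∈ A
      · have hxB : x ∉ B := fun h => hx ⟨hxA, h⟩
        exact hB m hm.2 m' hm'.2 x hxB
      · exact hA m hm.1 m' hm'.1 x hxA
    -- difference; general lemma applicable to both A \ B and B \ A
    have hdiff : ∀ (A B : Set X), IsModule H A → IsModule H B →
        ∀ c ∈ B, c ∉ A → IsModule H (A \ B) := by
      intro A B hA hB c hcB hcA m hm m' hm' x hx
      by_cases hxA : x ∈ A
      · have hxB : x ∈ B := by
          by_contra hxB
          exact hx ⟨hxA, hxB⟩
        have h1 : H x m c := key_lemma ⟨hrefl, hsym, htrans⟩ hwg hA hB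
          hm.1 hm.2 hxA hxB hcB hcA
        have h2 : H x m' c := key_lemma ⟨hrefl, hsym, htrans⟩ hwg hA hB
          hm'.1 hm'.2 hxA hxB hcB hcA
        have hmx : m ≠ x := fun h => hm.2 (h ▸ hxB)
        have hm'x : m' ≠ x := fun h => hm'.2 (h ▸ hxB)
        have hcx : c ≠ x := fun h => hcA (h ▸ hxA)
        exact htrans x m c m' hmx hcx hm'x h1 (hsym x m' c hm'x hcx h2)
      · exact hA m hm.1 m' hm'.1 x hxA
    have hAB : IsModule H (A \ B) := hdiff A B hA hB b hbB hbA
    have hBA : IsModule H (B \ A) := hdiff B A hB hA a haA haB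
    refine ⟨hunion, hinter, hAB, ?_⟩
    -- symmetric difference
    intro m hm m' hm' x hx
    have hx1 : x ∉ A \ B := fun h => hx (Or.inl h)
    have hx2 : x ∉ B \ A := fun h => hx (Or.inr h)
    by_cases hxA : x ∈ A
    · have hxB : x ∈ B := by
        by_contra hxB; exact hx1 ⟨hxA, hxB⟩
      rcases hm with hm | hm <;> rcases hm' with hm' | hm'
      · exact hAB m hm m' hm' x hx1
      · exact key_lemma ⟨hrefl, hsym, htrans⟩ hwg hA hB hm.1 hm.2 hxA hxB hm'.1 hm'.2
      · have h := key_lemma ⟨hrefl, hsym, htrans⟩ hwg hA hB hm'.1 hm'.2 hxA hxB hm.1 hm.2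
        exact hsym x m' m (fun hh => hm'.2 (hh ▸ hxB)) (fun hh => hm.2 (hh ▸ hxA)) h
      · exact hBA m hm m' hm' x hx2
    · by_cases hxB : x ∈ B
      · -- x ∈ B \ A : contradiction
        exact absurd ⟨hxB, hxA⟩ hx2
      · -- x ∉ A ∪ B
        have hxU : x ∉ A ∪ B := fun h => h.elim hxA hxB
        have hmU : m ∈ A ∪ B := hm.elim (fun h => Or.inl h.1) (fun h => Or.inr h.1)
        have hm'U : m' ∈ A ∪ B := hm'.elim (fun h => Or.inl h.1) (fun h => Or.inr h.1)
        exact hunion m hmU m' hm'U x hxU
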